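/- arXiv:1805.09880 — 4 statements merged into one kernel-verified Lean document; each statement's English description precedes it below -/
import Mathlib

section
/- Let (M,w0) be a single-pointed S5 epistemic model over a single agent a, and let (E,e0) be a single-pointed S5 event model over the single agent a whose postconditions are all empty, such that M,w0 ⊨ pre(e0). Let W' be the set of worlds of M that are a-accessible from w0, let E' be the set of events of E that are a-accessible from e0, and let W'' = { w ∈ W' : M,w ⊨ pre(e) for at least one e ∈ E' }. Then the pointed model (M⊗E, (w0,e0)) is bisimilar to (M', w0), where M' is the submodel of M induced by W''. -/
namespace DELMC

inductive DForm (Agent : Type) : Type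
  | atom : ℕ → DForm Agent
  | neg : DForm Agent → DForm Agent
  | and : DForm Agent → DForm Agent → DForm Agent
  | K : Agent → DForm Agent → DForm Agent
  | upd : (k : ℕ) → (Agent → Fin (k+1) → Fin (k+1) → Bool) →
      (Fin (k+1) → DForm Agent) → (Fin (k+1) → List (ℕ × Bool)) →
      (Fin (k+1) → Bool) → DForm Agent → DForm Agent

structure EpiModel (Agent : Type) where
  World : Type
  rel : Agent → World → World → Prop
  val : World → ℕ → Prop

def postEval (l : List (ℕ × Bool)) (p : ℕ) : Option Bool :=
  (l.find? (fun q => q.1 == p)).map Prod.snd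

def updModel {Agent : Type} (M : EpiModel Agent) (k : ℕ)
    (S : Agent → Fin (k+1) → Fin (k+1) → Bool)
    (dom : M.World → Fin (k+1) → Prop)
    (post : Fin (k+1) → List (ℕ × Bool)) : EpiModel Agent where
  World := { p : M.World × Fin (k+1) // dom p.1 p.2 }
  rel a u v := M.rel a u.1.1 v.1.1 ∧ S a u.1.2 v.1.2 = true
  val u p :=
    match postEval (post u.1.2) p with
    | some b => b = true
    | none => M.val u.1.1 p

def Sat {Agent : Type} : (M : EpiModel Agent) → M.World → DForm Agent → Prop
  | M, w, .atom p => M.val w p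
  | M, w, .neg φ => ¬ Sat M w φ
  | M, w, .and φ ψ => Sat M w φ ∧ Sat M w ψ
  | M, w, .K a φ => ∀ v, M.rel a w v → Sat M v φ
  | M, w, .upd k S pre post des φ =>
      ∀ e, des e = true → ∀ h : Sat M w (pre e),
        Sat (updModel M k S (fun v e' => Sat M v (pre e')) post) ⟨(w, e), h⟩ φ

/-- `K̂_a φ := ¬ K_a ¬ φ`. -/
def khat {Agent : Type} (a : Agent) (φ : DForm Agent) : DForm Agent := .neg (.K a (.neg φ))

/-- The formula `⊤` (as the abbreviation `¬(p ∧ ¬p)`). -/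
def dtop {Agent : Type} : DForm Agent := .neg (.and (.atom 0) (.neg (.atom 0)))

/-- Implication `φ → ψ`, as the abbreviation `¬(φ ∧ ¬ψ)`. -/
def dimp {Agent : Type} (φ ψ : DForm Agent) : DForm Agent := .neg (.and φ (.neg ψ))

/-- Conjunction of a list of formulas. -/
def bigAnd {Agent : Type} : List (DForm Agent) → DForm Agent
  | [] => dtop
  | [φ] => φ
  | φ :: rest => .and φ (bigAnd rest)

/-- An epistemic model is S5 if all relations are equivalence relations. -/
def EpiModel.IsS5 {Agent : Type} (M : EpiModel Agent) : Prop := ∀ a, Equivalence (M.rel a)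

/-- A list of literals contains no complementary pair. -/
def NoComplPair (l : List (ℕ × Bool)) : Prop := ∀ p : ℕ, ¬ ((p, true) ∈ l ∧ (p, false) ∈ l)

/-- All update modalities in the formula use S5 event models (with no constraint on
designated events or postconditions beyond non-complementarity). -/
def DForm.updsS5 {Agent : Type} : DForm Agent → Prop
  | .atom _ => True
  | .neg φ => φ.updsS5
  | .and φ ψ => φ.updsS5 ∧ ψ.updsS5
  | .K _ φ => φ.updsS5
  | .upd _ S pre post _ φ =>
      (∀ a, Equivalence (fun i j => S a i j = true)) ∧
      (∀ e, NoComplPair (post e)) ∧ (∀ e, (pre e).updsS5) ∧ φ.updsS5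

/-- All update modalities are single-pointed (exactly one designated event). -/
def DForm.updsSingle {Agent : Type} : DForm Agent → Prop
  | .atom _ => True
  | .neg φ => φ.updsSingle
  | .and φ ψ => φ.updsSingle ∧ ψ.updsSingle
  | .K _ φ => φ.updsSingle
  | .upd _ _ pre _ des φ =>
      (∃! e, des e = true) ∧ (∀ e, (pre e).updsSingle) ∧ φ.updsSingle

/-- All update modalities have empty postconditions. -/
def DForm.updsNoPost {Agent : Type} : DForm Agent → Prop
  | .atom _ => True
  | .neg φ => φ.updsNoPost
  | .and φ ψ => φ.updsNoPost ∧ ψ.updsNoPost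
  | .K _ φ => φ.updsNoPost
  | .upd _ _ pre post _ φ =>
      (∀ e, post e = []) ∧ (∀ e, (pre e).updsNoPost) ∧ φ.updsNoPost

/-- The formula contains no update modalities (it is a formula of basic epistemic logic). -/
def DForm.noUpd {Agent : Type} : DForm Agent → Prop
  | .atom _ => True
  | .neg φ => φ.noUpd
  | .and φ ψ => φ.noUpd ∧ ψ.noUpd
  | .K _ φ => φ.noUpd
  | .upd _ _ _ _ _ _ => False

/-- All propositional variables occurring in the formula belong to `s`. -/
def DForm.atomsSub {Agent : Type} (s : Set ℕ) : DForm Agent → Prop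
  | .atom p => p ∈ s
  | .neg φ => φ.atomsSub s
  | .and φ ψ => φ.atomsSub s ∧ ψ.atomsSub s
  | .K _ φ => φ.atomsSub s
  | .upd _ _ pre post _ φ =>
      (∀ e, (pre e).atomsSub s) ∧ (∀ e q, q ∈ post e → q.1 ∈ s) ∧ φ.atomsSub s

/-- Event models (with events `Fin (k+1)`, hence finite and nonempty). -/
structure EvtModel (Agent : Type) where
  k : ℕ
  S : Agent → Fin (k+1) → Fin (k+1) → Bool
  pre : Fin (k+1) → DForm Agent
  post : Fin (k+1) → List (ℕ × Bool)

def EvtModel.IsS5 {Agent : Type} (E : EvtModel Agent) : Prop :=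
  ∀ a, Equivalence (fun i j => E.S a i j = true)

def EvtModel.NoPost {Agent : Type} (E : EvtModel Agent) : Prop := ∀ e, E.post e = []

/-- The product update `M ⊗ E` of an epistemic model with an event model. -/
def EpiModel.update {Agent : Type} (M : EpiModel Agent) (E : EvtModel Agent) : EpiModel Agent :=
  updModel M E.k E.S (fun w e => Sat M w (E.pre e)) E.post

/-- The single-pointed update modality `[E, d]φ` as a formula. -/
def updSingle {Agent : Type} (E : EvtModel Agent) (d : Fin (E.k+1)) (φ : DForm Agent) :
    DForm Agent :=
  .upd E.k E.S E.pre E.post (fun e => decide (e = d)) φ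

/-- The multi-pointed update modality `[E, E_d]φ` with all events designated. -/
def updAll {Agent : Type} (E : EvtModel Agent) (φ : DForm Agent) : DForm Agent :=
  .upd E.k E.S E.pre E.post (fun _ => true) φ

/-- The submodel of `M` induced by the set `U` of worlds. -/
def EpiModel.restrict {Agent : Type} (M : EpiModel Agent) (U : M.World → Prop) :
    EpiModel Agent where
  World := {w : M.World // U w}
  rel a u v := M.rel a u.1 v.1
  val u p := M.val u.1 p

/-- `Z` is a bisimulation between the models `M` and `N`. -/
def IsBisim {Agent : Type} (M N : EpiModel Agent) (Z : M.World → N.World → Prop) : Prop :=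
  ∀ u u', Z u u' →
    (∀ p, M.val u p ↔ N.val u' p) ∧
    (∀ a v, M.rel a u v → ∃ v', N.rel a u' v' ∧ Z v v') ∧
    (∀ a v', N.rel a u' v' → ∃ v, M.rel a u v ∧ Z v v')

/-- The pointed models `(M, w)` and `(N, v)` are bisimilar. -/
def Bisimilar {Agent : Type} (M : EpiModel Agent) (w : M.World)
    (N : EpiModel Agent) (v : N.World) : Prop :=
  ∃ Z, IsBisim M N Z ∧ Z w v

/-- Quantifier-free propositional formulas. -/
inductive PropForm : Type
  | atom : ℕ → PropForm
  | neg : PropForm → PropForm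
  | and : PropForm → PropForm → PropForm

def PropForm.eval (α : ℕ → Bool) : PropForm → Bool
  | .atom p => α p
  | .neg φ => !(φ.eval α)
  | .and φ ψ => φ.eval α && ψ.eval α

def PropForm.atomsSub (s : Set ℕ) : PropForm → Prop
  | .atom p => p ∈ s
  | .neg φ => φ.atomsSub s
  | .and φ ψ => φ.atomsSub s ∧ ψ.atomsSub s

/-- `β` is lexicographically larger than `α` w.r.t. the ordering `x_1 ≺ … ≺ x_n`
(variable `x_i` is the propositional variable `i`). -/
def LexGT (n : ℕ) (β α : ℕ → Bool) : Prop :=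
  ∃ i, 1 ≤ i ∧ i ≤ n ∧ β i = true ∧ α i = false ∧ ∀ j, 1 ≤ j → j < i → β j = α j

/-- `α` is the lexicographically maximal assignment satisfying `ψ` (w.r.t. `x_1 ≺ … ≺ x_n`). -/
def IsLexMaxSat (n : ℕ) (ψ : PropForm) (α : ℕ → Bool) : Prop :=
  ψ.eval α = true ∧ ∀ β, ψ.eval β = true → ¬ LexGT n β α

/-- Truth of the partially quantified Boolean formula `Q_i x_i … Q_n x_n. ψ` under an
assignment, where `Q_j = ∃` for odd `j` and `Q_j = ∀` for even `j`; the first argument is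
the number of remaining quantifiers (i.e. `n + 1 - i`), the second is the index `i`. -/
def QBFAux (ψ : PropForm) : ℕ → ℕ → (ℕ → Bool) → Prop
  | 0, _, α => ψ.eval α = true
  | m+1, i, α =>
    if i % 2 = 1 then ∃ b, QBFAux ψ m (i+1) (Function.update α i b)
    else ∀ b, QBFAux ψ m (i+1) (Function.update α i b)

/-- Truth of the quantified Boolean formula `∃x_1 ∀x_2 … Q_n x_n. ψ`. -/
def QBFTrue (n : ℕ) (ψ : PropForm) : Prop := QBFAux ψ n 1 (fun _ => false)

/-- Concrete finite epistemic models, suitable as inputs of algorithms. -/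
structure FinModel (Agent : Type) where
  m : ℕ
  rel : Agent → Fin (m+1) → Fin (m+1) → Bool
  val : Fin (m+1) → List ℕ

def FinModel.toEpi {Agent : Type} (M : FinModel Agent) : EpiModel Agent where
  World := Fin (M.m+1)
  rel a u v := M.rel a u v = true
  val w p := p ∈ M.val w

def FinModel.IsS5 {Agent : Type} (M : FinModel Agent) : Prop :=
  ∀ a, Equivalence (fun u v => M.rel a u v = true)


/-! ### The Δ₂ᵖ-hardness construction (single agent, postconditions).
Variable `z` is the propositional variable `0`; variable `x_i` is `i`. -/

/-- The embedding of propositional formulas into the (dynamic) epistemic language. -/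
def PropForm.toDForm {Agent : Type} : PropForm → DForm Agent
  | .atom p => .atom p
  | .neg φ => .neg φ.toDForm
  | .and φ ψ => .and φ.toDForm ψ.toDForm

/-- The initial model of the Δ₂ᵖ-hardness construction: worlds `w₀ = 0` (making exactly `z`
true) and `w₁ = 1` (making everything false), fully `a`-related. -/
def deltaM : EpiModel Unit where
  World := Fin 2
  rel _ _ _ := True
  val w p := w = 0 ∧ p = 0

def deltaW0 : deltaM.World := (0 : Fin 2)

/-- The event model `(E_i, e_i)`: three mutually related events; designated event `0` with
precondition `z`; event `1` with precondition `¬z` and postcondition `{x_i}`; event `2`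
with precondition `¬z` and empty postcondition. -/
def deltaE (i : ℕ) : EvtModel Unit where
  k := 2
  S _ _ _ := true
  pre e := if e = 0 then .atom 0 else .neg (.atom 0)
  post e := if e = 1 then [(i, true)] else []

/-- The event model `(E'_i, e'_i)`: designated event `0` with precondition `z`; event `1`
with precondition `¬z ∧ K̂_a(x_i ∧ φ)` and postcondition `{x_i}`; event `2` with
precondition `¬z ∧ ¬K̂_a(x_i ∧ φ)` and postcondition `{¬x_i}`. -/
def deltaE' (i : ℕ) (ψ : PropForm) : EvtModel Unit where
  k := 2
  S _ _ _ := true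
  pre e :=
    if e = 0 then .atom 0
    else if e = 1 then .and (.neg (.atom 0)) (khat () (.and (.atom i) ψ.toDForm))
    else .and (.neg (.atom 0)) (.neg (khat () (.and (.atom i) ψ.toDForm)))
  post e := if e = 1 then [(i, true)] else if e = 2 then [(i, false)] else []

/-- The formula `χ = [E_1,e_1]…[E_n,e_n][E'_1,e'_1]…[E'_n,e'_n] K̂_a x_n`. -/
def deltaChi (n : ℕ) (ψ : PropForm) : DForm Unit :=
  ((List.range n).map (fun j => deltaE (j+1))).foldr (fun E acc => updSingle E 0 acc)
    (((List.range n).map (fun j => deltaE' (j+1) ψ)).foldr (fun E acc => updSingle E 0 acc)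
      (khat () (.atom n)))

/-- The model `M' = M ⊗ E_1 ⊗ … ⊗ E_n`. -/
def deltaM' (n : ℕ) : EpiModel Unit :=
  (((List.range n).map (fun j => deltaE (j+1))).foldl EpiModel.update deltaM)

/-- The model `M'' = M ⊗ E_1 ⊗ … ⊗ E_n ⊗ E'_1 ⊗ … ⊗ E'_n`. -/
def deltaM'' (n : ℕ) (ψ : PropForm) : EpiModel Unit :=
  (((List.range n).map (fun j => deltaE' (j+1) ψ)).foldl EpiModel.update (deltaM' n))

/-! ### The single-agent multi-pointed PSPACE-hardness construction.
Variable `x_i` is the propositional variable `i`. -/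

/-- The group of worlds corresponding to a truth assignment `α`: a world `none` making
no variable true and, for each `j` with `α x_j = 1`, a world `some j` making exactly `x_j`
true; all worlds mutually `a`-related. -/
def groupModel1 (n : ℕ) (α : ℕ → Bool) : EpiModel Unit where
  World := {o : Option (Fin n) // ∀ j : Fin n, o = some j → α (j.1+1) = true}
  rel _ _ _ := True
  val w p := ∃ j : Fin n, w.1 = some j ∧ p = j.1 + 1

/-- The designated world of the group of worlds corresponding to `α`. -/
def groupW0 (n : ℕ) (α : ℕ → Bool) : (groupModel1 n α).World :=
  ⟨none, fun _ h => nomatch h⟩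

/-- The multi-pointed event model `(E_i, E_i)`: two events, both designated, with
preconditions `⊤` and `¬x_i`, empty postconditions, and only reflexive relations. -/
def qEvt (i : ℕ) : EvtModel Unit where
  k := 1
  S _ e f := decide (e = f)
  pre e := if e = 0 then dtop else .neg (.atom i)
  post _ := []

/-- `χ'`: the result of replacing every variable `x_i` in `ψ` by `K̂_a x_i`. -/
def propKhat : PropForm → DForm Unit
  | .atom p => khat () (.atom p)
  | .neg φ => .neg (propKhat φ)
  | .and φ ψ => .and (propKhat φ) (propKhat ψ)

/-- `qChiAux ψ' m i` is the formula `⟨E_i,E_i⟩[E_{i+1},E_{i+1}]…ψ'` (`m` operators,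
diamond at odd indices, box at even indices). -/
def qChiAux (ψ' : DForm Unit) : ℕ → ℕ → DForm Unit
  | 0, _ => ψ'
  | m+1, i =>
    if i % 2 = 1 then .neg (updAll (qEvt i) (.neg (qChiAux ψ' m (i+1))))
    else updAll (qEvt i) (qChiAux ψ' m (i+1))

/-- The formula `χ = ⟨E_1,E_1⟩[E_2,E_2]…⟨E_{n-1},E_{n-1}⟩[E_n,E_n]χ'`. -/
def qChi (n : ℕ) (ψ : PropForm) : DForm Unit := qChiAux (propKhat ψ) n 1


/-! ### The two-agent PSPACE-hardness construction.
Agents: `a = 0`, `b = 1` (of type `Fin 2`). Propositional variables: `z_0 = 0`,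
`z_1 = 1`, `z_2 = 2`. Variable `x_j` of the QBF corresponds to the z1-chain of length `j`. -/

/-- The underlying worlds of a group of worlds, possibly together with z2-chains:
the central world, the worlds `z1 j k` (position `k` in the z1-chain of length `j+1`,
which represents the variable `x_{j+1}`), and the worlds `z2 i k` (position `k` in the
z2-chain of length `i+1`). -/
inductive GWBase (n m : ℕ) : Type
  | central : GWBase n m
  | z1 : (j : Fin n) → Fin (j.1+2) → GWBase n m
  | z2 : (i : Fin m) → Fin (i.1+2) → GWBase n m

/-- Membership in the `a`-clique: the central world and the first worlds of z1-chains. -/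
def aClique {n m : ℕ} : GWBase n m → Prop
  | .central => True
  | .z1 _ k => k.1 = 0
  | .z2 _ _ => False

/-- Membership in the `b`-clique: the central world and the first worlds of z2-chains. -/
def bClique {n m : ℕ} : GWBase n m → Prop
  | .central => True
  | .z1 _ _ => False
  | .z2 _ k => k.1 = 0

/-- Chain edges: consecutive positions of a z1-chain are related alternately by
`b`, `a`, `b`, … (starting with `b`), and those of a z2-chain alternately by
`a`, `b`, `a`, … (starting with `a`). -/
def chainEdge {n m : ℕ} (ag : Fin 2) : GWBase n m → GWBase n m → Prop
  | .z1 j k, .z1 j' k' =>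
      j.1 = j'.1 ∧ ((k'.1 = k.1 + 1 ∧ ag = (if k.1 % 2 = 0 then 1 else 0)) ∨
        (k.1 = k'.1 + 1 ∧ ag = (if k'.1 % 2 = 0 then 1 else 0)))
  | .z2 i k, .z2 i' k' =>
      i.1 = i'.1 ∧ ((k'.1 = k.1 + 1 ∧ ag = (if k.1 % 2 = 0 then 0 else 1)) ∨
        (k.1 = k'.1 + 1 ∧ ag = (if k'.1 % 2 = 0 then 0 else 1)))
  | _, _ => False

/-- The accessibility relations on `GWBase n m`. -/
def gwRel {n m : ℕ} (ag : Fin 2) (u v : GWBase n m) : Prop :=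
  u = v ∨ (ag = 0 ∧ aClique u ∧ aClique v) ∨ (ag = 1 ∧ bClique u ∧ bClique v) ∨
    chainEdge ag u v

/-- The valuation on `GWBase n m`: the central world makes exactly `z_1` and `z_2` true,
the first world of a chain makes exactly `z_1` (resp. `z_2`) true, the last world of a
chain makes exactly `z_0` true, and all other worlds make no variable true. -/
def gwVal {n m : ℕ} : GWBase n m → ℕ → Prop
  | .central, p => p = 1 ∨ p = 2
  | .z1 j k, p => (k.1 = 0 ∧ p = 1) ∨ (k.1 = j.1 + 1 ∧ p = 0)
  | .z2 i k, p => (k.1 = 0 ∧ p = 2) ∨ (k.1 = i.1 + 1 ∧ p = 0)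

/-- The group of worlds representing the truth assignment `α` to `x_1, …, x_n`
(containing a z1-chain of length `j` exactly when `α x_j = 1`), together with
z2-chains of lengths `1, …, m`. -/
def groupModel2 (n m : ℕ) (α : ℕ → Bool) : EpiModel (Fin 2) where
  World := {u : GWBase n m // ∀ (j : Fin n) (k : Fin (j.1+2)), u = GWBase.z1 j k → α (j.1+1) = true}
  rel ag u v := gwRel ag u.1 v.1
  val u p := gwVal u.1 p

/-- The central (designated) world of `groupModel2 n m α`. -/
def central2 (n m : ℕ) (α : ℕ → Bool) : (groupModel2 n m α).World :=
  ⟨.central, fun _ _ h => nomatch h⟩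

/-- The pair of formulas `(χ^a_j, χ^b_j)`. -/
def chiAB : ℕ → DForm (Fin 2) × DForm (Fin 2)
  | 0 => (.atom 0, .atom 0)
  | j+1 =>
    (khat 0 (.and (.neg (.atom 1)) (.and (.neg (.atom 2)) (chiAB j).2)),
     khat 1 (.and (.neg (.atom 1)) (.and (.neg (.atom 2)) (chiAB j).1)))

def chiA (j : ℕ) : DForm (Fin 2) := (chiAB j).1
def chiB (j : ℕ) : DForm (Fin 2) := (chiAB j).2

/-- `χ_j = z_1 ∧ ¬z_2 ∧ χ^b_j ∧ ¬χ^b_{j-1}` (for `j ≥ 1`). -/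
def chiX (j : ℕ) : DForm (Fin 2) :=
  .and (.atom 1) (.and (.neg (.atom 2)) (.and (chiB j) (.neg (chiB (j-1)))))

/-- `χ'_j = ¬z_1 ∧ z_2 ∧ χ^a_j ∧ ¬χ^a_{j-1}` (for `j ≥ 1`). -/
def chiX' (j : ℕ) : DForm (Fin 2) :=
  .and (.neg (.atom 1)) (.and (.atom 2) (.and (chiA j) (.neg (chiA (j-1)))))

/-- The event model `(E_i, e_i)` of the two-agent construction: events `f^1_i, …, f^5_i`
are `0, …, 4`; `{0,1,2}` is a `b`-clique; `1 S_a 3` and `2 S_a 4`; preconditions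
`⊤, ⊤, ⊤, ¬χ'_i, ¬χ'_i ∧ ¬χ_i`; empty postconditions; designated event `0`. -/
def twoEvt (i : ℕ) : EvtModel (Fin 2) where
  k := 4
  S ag e f := decide (e = f) ||
    (if ag = 1 then decide (e.1 ≤ 2 ∧ f.1 ≤ 2)
     else decide ((e.1 = 1 ∧ f.1 = 3) ∨ (e.1 = 3 ∧ f.1 = 1) ∨
       (e.1 = 2 ∧ f.1 = 4) ∨ (e.1 = 4 ∧ f.1 = 2)))
  pre e :=
    if e.1 ≤ 2 then dtop
    else if e.1 = 3 then .neg (chiX' i)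
    else .and (.neg (chiX' i)) (.neg (chiX i))
  post _ := []

/-- The conjunction `⋀_{1 ≤ j ≤ i} ¬K̂_b χ'_j`. -/
def negConj (i : ℕ) : DForm (Fin 2) :=
  bigAnd ((List.range i).map (fun t => .neg (khat 1 (chiX' (t+1)))))

/-- The conjunction `⋀_{i < j ≤ n} K̂_b χ'_j`. -/
def posConj (n i : ℕ) : DForm (Fin 2) :=
  bigAnd ((List.range (n-i)).map (fun t => khat 1 (chiX' (i+1+t))))

/-- The formula `z_1 ∧ z_2 ∧ ⋀_{1≤j≤i} ¬K̂_b χ'_j ∧ ⋀_{i<j≤n} K̂_b χ'_j`. -/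
def xiBody (n i : ℕ) : DForm (Fin 2) :=
  .and (.atom 1) (.and (.atom 2) (.and (negConj i) (posConj n i)))

/-- `ψ'`: the result of replacing every variable `x_i` in `ψ` by `K̂_a χ_i`. -/
def propToXi : PropForm → DForm (Fin 2)
  | .atom p => khat 0 (chiX p)
  | .neg φ => .neg (propToXi φ)
  | .and φ ψ => .and (propToXi φ) (propToXi ψ)

/-- `xiAux n ψ' m i` is the formula `ξ_i` (with `m = n + 1 - i` remaining steps). -/
def xiAux (n : ℕ) (ψ' : DForm (Fin 2)) : ℕ → ℕ → DForm (Fin 2)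
  | 0, _ => ψ'
  | m+1, i =>
    if i % 2 = 1 then khat 1 (khat 0 (.and (xiBody n i) (xiAux n ψ' m (i+1))))
    else .K 1 (.K 0 (dimp (xiBody n i) (xiAux n ψ' m (i+1))))

/-- The formula `ξ = [E_1,e_1]…[E_n,e_n]ξ_1`. -/
def xiFull (n : ℕ) (ψ : PropForm) : DForm (Fin 2) :=
  ((List.range n).map (fun j => twoEvt (j+1))).foldr (fun E acc => updSingle E 0 acc)
    (xiAux n (propToXi ψ) n 1)

/-- The initial model of the two-agent construction (z1-chains of lengths `1, …, n` for
the all-true assignment, z2-chains of lengths `1, …, n`). -/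
def twoM (n : ℕ) : EpiModel (Fin 2) := groupModel2 n n (fun _ => true)

/-- The model `M' = M ⊗ E_1 ⊗ … ⊗ E_n` of the two-agent construction. -/
def twoM' (n : ℕ) : EpiModel (Fin 2) :=
  ((List.range n).map (fun j => twoEvt (j+1))).foldl EpiModel.update (twoM n)

/-! ### The semi-private-announcement PSPACE-hardness construction. -/

/-- The semi-private announcement of `φ₁` versus `φ₂` to the agents `c` with `A c = true`:
two events with preconditions `φ₁` (designated, event `0`) and `φ₂`, empty postconditions,
related by `S_c` exactly for the agents `c` not in `A` (plus reflexive loops). -/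
def semiPrivate {Agent : Type} [DecidableEq Agent] (φ₁ φ₂ : DForm Agent) (A : Agent → Bool) :
    EvtModel Agent where
  k := 1
  S c e f := decide (e = f) || !(A c)
  pre e := if e = 0 then φ₁ else φ₂
  post _ := []

/-- The semi-private announcement `(E^1_i, f^1_i)`: `¬χ'_{i+n}` versus `¬χ'_{i+2n}`,
announced to agent `a`. -/
def spE1 (n i : ℕ) : EvtModel (Fin 2) :=
  semiPrivate (.neg (chiX' (i+n))) (.neg (chiX' (i+2*n))) (fun c => decide (c = 0))

/-- The semi-private announcement `(E^2_i, f^3_i)`: `⊤` versus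
`(¬K̂_b χ'_{i+n} ∧ z_2) → ¬χ'_i`, announced to agent `b`. -/
def spE2 (n i : ℕ) : EvtModel (Fin 2) :=
  semiPrivate dtop
    (dimp (.and (.neg (khat 1 (chiX' (i+n)))) (.atom 2)) (.neg (chiX' i)))
    (fun c => decide (c = 1))

/-- The semi-private announcement `(E^3_i, f^5_i)`: `⊤` versus
`((¬K̂_b χ'_{i+2n} ∧ z_2) → ¬χ'_i) ∧ ((¬K̂_a K̂_b χ'_{i+2n} ∧ z_1) → ¬χ_i)`,
announced to agent `b`. -/
def spE3 (n i : ℕ) : EvtModel (Fin 2) :=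
  semiPrivate dtop
    (.and (dimp (.and (.neg (khat 1 (chiX' (i+2*n)))) (.atom 2)) (.neg (chiX' i)))
      (dimp (.and (.neg (khat 0 (khat 1 (chiX' (i+2*n))))) (.atom 1)) (.neg (chiX i))))
    (fun c => decide (c = 1))

/-- The list of event models `E^1_1, E^2_1, E^3_1, …, E^1_n, E^2_n, E^3_n`. -/
def spList (n : ℕ) : List (EvtModel (Fin 2)) :=
  ((List.range n).map (fun j => [spE1 n (j+1), spE2 n (j+1), spE3 n (j+1)])).flatten

/-- `spXiAux n ψ' m i` is the formula `ξ_i` of the semi-private construction. -/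
def spXiAux (n : ℕ) (ψ' : DForm (Fin 2)) : ℕ → ℕ → DForm (Fin 2)
  | 0, _ => ψ'
  | m+1, i =>
    if i % 2 = 1 then
      khat 1 (.and (negConj i) (khat 0 (.and (xiBody n i) (spXiAux n ψ' m (i+1)))))
    else
      .K 1 (dimp (negConj i) (.K 0 (dimp (xiBody n i) (spXiAux n ψ' m (i+1)))))

/-- The formula `ξ = [E^1_1,f^1_1][E^2_1,f^3_1][E^3_1,f^5_1]…[E^3_n,f^5_n]ξ_1` of the
semi-private construction. -/
def spXiFull (n : ℕ) (ψ : PropForm) : DForm (Fin 2) :=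
  (spList n).foldr (fun E acc => updSingle E 0 acc) (spXiAux n (propToXi ψ) n 1)

/-- The initial model of the semi-private construction (z1-chains of lengths `1, …, n`
for the all-true assignment, z2-chains of lengths `1, …, 3n`). -/
def spM (n : ℕ) : EpiModel (Fin 2) := groupModel2 n (3*n) (fun _ => true)

/-- The model `M' = M ⊗ E^1_1 ⊗ E^2_1 ⊗ E^3_1 ⊗ … ⊗ E^3_n`. -/
def spM' (n : ℕ) : EpiModel (Fin 2) :=
  (spList n).foldl EpiModel.update (spM n)


/-- For a single-pointed S5 epistemic model `(M, w0)` over a single agent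
and a single-pointed S5 event model `(E, e0)` over the single agent with empty
postconditions such that `M, w0 ⊨ pre(e0)`: letting `W'` be the worlds `a`-accessible
from `w0`, `E'` the events `a`-accessible from `e0`, and `W''` the worlds of `W'` that
satisfy the precondition of at least one event of `E'`, the pointed model
`(M ⊗ E, (w0, e0))` is bisimilar to `(M', w0)` where `M'` is the submodel of `M`
induced by `W''`. -/
theorem statement1 (M : EpiModel Unit) (hM : M.IsS5) (w0 : M.World)
    (E : EvtModel Unit) (hE : E.IsS5) (hpost : E.NoPost)
    (e0 : Fin (E.k+1)) (h0 : Sat M w0 (E.pre e0))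
    (W'' : M.World → Prop)
    (hW'' : ∀ w, W'' w ↔ (M.rel () w0 w ∧ ∃ e, E.S () e0 e = true ∧ Sat M w (E.pre e)))
    (hw0 : W'' w0) :
    Bisimilar (M.update E) ⟨(w0, e0), h0⟩ (M.restrict W'') ⟨w0, hw0⟩ := by
  classical
  refine ⟨fun u v => u.1.1 = v.1 ∧ E.S () e0 u.1.2 = true, ?_, rfl, (hE ()).refl e0⟩
  rintro ⟨⟨w, e⟩, hpre⟩ ⟨w', hw'⟩ ⟨heq, hSe⟩
  cases heq
  refine ⟨?_, ?_, ?_⟩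
  · intro p
    show (match postEval (E.post e) p with
      | some b => b = true
      | none => M.val w p) ↔ M.val w p
    rw [hpost e]
    simp [postEval]
  · rintro ⟨⟩ ⟨⟨v, f⟩, hvf⟩ ⟨hrv, hSf⟩
    have hw0w : M.rel () w0 w := ((hW'' w).1 hw').1
    have hW''v : W'' v := (hW'' v).2 ⟨(hM ()).trans hw0w hrv,
      f, (hE ()).trans hSe hSf, hvf⟩
    exact ⟨⟨v, hW''v⟩, hrv, rfl, (hE ()).trans hSe hSf⟩
  · rintro ⟨⟩ ⟨v, hv⟩ hrv
    obtain ⟨hw0v, f, hf, hvf⟩ := (hW'' v).1 hv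
    exact ⟨⟨(v, f), hvf⟩, ⟨hrv, (hE ()).trans ((hE ()).symm hSe) hf⟩, rfl, hf⟩

end DELMC
end

section
/- If two single-pointed epistemic models (M,w) and (M',w') are bisimilar, then for every formula φ of the dynamic epistemic language L_DEL (including formulas containing update modalities with event models), M,w ⊨ φ if and only if M',w' ⊨ φ. -/
namespace DELMC

/-- If two single-pointed epistemic models are bisimilar, then they
satisfy the same formulas of the dynamic epistemic language (including formulas with
update modalities). -/
theorem statement2 {Agent : Type} (M : EpiModel Agent) (w : M.World)
    (N : EpiModel Agent) (v : N.World) (h : Bisimilar M w N v) (φ : DForm Agent) :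
    Sat M w φ ↔ Sat N v φ := by
  induction φ generalizing M w N v with
  | atom p =>
    obtain ⟨Z, hZ, hwv⟩ := h
    exact (hZ w v hwv).1 p
  | neg φ ih => exact not_congr (ih M w N v h)
  | and φ ψ ih1 ih2 => exact and_congr (ih1 M w N v h) (ih2 M w N v h)
  | K a φ ih =>
    obtain ⟨Z, hZ, hwv⟩ := h
    constructor
    · intro hK v' hrel
      obtain ⟨u, hu, hZu⟩ := (hZ w v hwv).2.2 a v' hrel
      exact (ih M u N v' ⟨Z, hZ, hZu⟩).mp (hK u hu)
    · intro hK u hrel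
      obtain ⟨v', hv', hZv⟩ := (hZ w v hwv).2.1 a u hrel
      exact (ih M u N v' ⟨Z, hZ, hZv⟩).mpr (hK v' hv')
  | upd k S pre post des φ ihpre ihφ =>
    obtain ⟨Z, hZ, hwv⟩ := h
    have hpre : ∀ (u : M.World) (u' : N.World), Z u u' → ∀ e,
        Sat M u (pre e) ↔ Sat N u' (pre e) :=
      fun u u' hu e => ihpre e M u N u' ⟨Z, hZ, hu⟩
    set MU := updModel M k S (fun x e => Sat M x (pre e)) post with hMU
    set NU := updModel N k S (fun x e => Sat N x (pre e)) post with hNU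
    let Z' : MU.World → NU.World → Prop :=
      fun u u' => Z u.1.1 u'.1.1 ∧ u.1.2 = u'.1.2
    have hZ' : IsBisim MU NU Z' := by
      rintro ⟨⟨x, e⟩, hx⟩ ⟨⟨y, f⟩, hy⟩ ⟨hxy, hef⟩
      dsimp at hef; subst hef
      refine ⟨?_, ?_, ?_⟩
      · intro p
        show (match postEval (post e) p with | some b => b = true | none => M.val x p) ↔
          (match postEval (post e) p with | some b => b = true | none => N.val y p)
        cases postEval (post e) p with
        | some b => exact Iff.rfl
        | none => exact (hZ x y hxy).1 p
      · rintro a ⟨⟨x', e'⟩, hx'⟩ ⟨hr, hs⟩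
        obtain ⟨y', hy', hZy⟩ := (hZ x y hxy).2.1 a x' hr
        exact ⟨⟨⟨y', e'⟩, (hpre x' y' hZy e').mp hx'⟩, ⟨hy', hs⟩, hZy, rfl⟩
      · rintro a ⟨⟨y', e'⟩, hy'⟩ ⟨hr, hs⟩
        obtain ⟨x', hx', hZx⟩ := (hZ x y hxy).2.2 a y' hr
        exact ⟨⟨⟨x', e'⟩, (hpre x' y' hZx e').mpr hy'⟩, ⟨hx', hs⟩, hZx, rfl⟩
    constructor
    · intro hS e hde hh
      have hh' : Sat M w (pre e) := (hpre w v hwv e).mpr hh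
      exact (ihφ MU ⟨(w, e), hh'⟩ NU ⟨(v, e), hh⟩ ⟨Z', hZ', hwv, rfl⟩).mp (hS e hde hh')
    · intro hS e hde hh
      have hh' : Sat N v (pre e) := (hpre w v hwv e).mp hh
      exact (ihφ MU ⟨(w, e), hh⟩ NU ⟨(v, e), hh'⟩ ⟨Z', hZ', hwv, rfl⟩).mpr (hS e hde hh')

end DELMC
end

section
/- Let φ be a satisfiable propositional formula over x_1,…,x_n, and let (M,w0), (E_i,e_i), (E'_i,e'_i) (for 1 ≤ i ≤ n), and χ be as in the Δ^p_2-hardness construction. Then M,w0 ⊨ χ if and only if the lexicographically maximal truth assignment satisfying φ sets x_n to true. -/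
namespace DELMC

section Statement4Aux

/-- Concrete "assignment model": a `z`-world `none` plus one world per assignment in `s`. -/
def AModel (s : (ℕ → Bool) → Prop) : EpiModel Unit where
  World := Option {α : ℕ → Bool // s α}
  rel _ _ _ := True
  val w p := match w with
    | none => p = 0
    | some β => p ≠ 0 ∧ β.1 p = true

/-- A total, surjective, valuation-preserving relation between two models with full
accessibility relations. -/
structure FullSim (M N : EpiModel Unit) (Z : M.World → N.World → Prop) : Prop where
  fullM : ∀ (a : Unit) (u v : M.World), M.rel a u v
  fullN : ∀ (a : Unit) (u v : N.World), N.rel a u v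
  val_iff : ∀ u v, Z u v → ∀ p, (M.val u p ↔ N.val v p)
  total : ∀ u, ∃ v, Z u v
  surj : ∀ v, ∃ u, Z u v

lemma sat_transfer {M N : EpiModel Unit} {Z} (h : FullSim M N Z) :
    ∀ φ : DForm Unit, φ.noUpd → ∀ u v, Z u v → (Sat M u φ ↔ Sat N v φ) := by
  intro φ
  induction φ with
  | atom p => intro _ u v huv; exact h.val_iff u v huv p
  | neg φ ih => intro hn u v huv; exact not_congr (ih hn u v huv)
  | and φ ψ ihφ ihψ =>
      intro hn u v huv; exact and_congr (ihφ hn.1 u v huv) (ihψ hn.2 u v huv)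
  | K a φ ih =>
      intro hn u v huv
      constructor
      · intro hs v' _
        obtain ⟨u', hu'⟩ := h.surj v'
        exact (ih hn u' v' hu').mp (hs u' (h.fullM a u u'))
      · intro hs u' _
        obtain ⟨v', hv'⟩ := h.total u'
        exact (ih hn u' v' hv').mpr (hs v' (h.fullN a v v'))
  | upd k S pre post des φ ihpre ih => intro hn; exact hn.elim

lemma sat_khat {M : EpiModel Unit} (hfull : ∀ (a : Unit) (u v : M.World), M.rel a u v)
    (w : M.World) (φ : DForm Unit) :
    Sat M w (khat () φ) ↔ ∃ v, Sat M v φ := by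
  simp only [khat, Sat]
  constructor
  · intro h
    by_contra hc
    push_neg at hc
    exact h (fun v _ hv => hc v hv)
  · rintro ⟨v, hv⟩ h
    exact h v (hfull () w v) hv

lemma sat_updSingle {M : EpiModel Unit} {w : M.World} {E : EvtModel Unit} {d : Fin (E.k+1)}
    {φ : DForm Unit} :
    Sat M w (updSingle E d φ) ↔
      ∀ h : Sat M w (E.pre d), Sat (M.update E) ⟨(w, d), h⟩ φ := by
  constructor
  · intro hs h
    exact hs d (by simp) h
  · intro hs e he h
    have : e = d := of_decide_eq_true he
    subst this
    exact hs h

lemma toDForm_noUpd (ψ : PropForm) : (PropForm.toDForm (Agent := Unit) ψ).noUpd := by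
  induction ψ with
  | atom p => trivial
  | neg φ ih => exact ih
  | and φ χ ih1 ih2 => exact ⟨ih1, ih2⟩

lemma atomsSub_mono {Agent : Type} {s t : Set ℕ} (hst : s ⊆ t) :
    ∀ φ : DForm Agent, φ.atomsSub s → φ.atomsSub t := by
  intro φ
  induction φ with
  | atom p => exact fun h => hst h
  | neg φ ih => exact ih
  | and φ χ ih1 ih2 => exact fun h => ⟨ih1 h.1, ih2 h.2⟩
  | K a φ ih => exact ih
  | upd k S pre post des φ ihpre ih =>
      exact fun h => ⟨fun e => ihpre e (h.1 e), fun e q hq => hst (h.2.1 e q hq), ih h.2.2⟩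

lemma propAtomsSub_mono {s t : Set ℕ} (hst : s ⊆ t) :
    ∀ ψ : PropForm, ψ.atomsSub s → ψ.atomsSub t := by
  intro ψ
  induction ψ with
  | atom p => exact fun h => hst h
  | neg φ ih => exact ih
  | and φ χ ih1 ih2 => exact fun h => ⟨ih1 h.1, ih2 h.2⟩

lemma eval_congr {s : Set ℕ} {ψ : PropForm} (h : ψ.atomsSub s) {α β : ℕ → Bool}
    (hab : ∀ p ∈ s, α p = β p) : ψ.eval α = ψ.eval β := by
  induction ψ with
  | atom p => exact hab p h
  | neg φ ih => simp only [PropForm.eval]; rw [ih h]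
  | and φ χ ih1 ih2 => simp only [PropForm.eval]; rw [ih1 h.1, ih2 h.2]

lemma sat_toDForm {s : (ℕ → Bool) → Prop} {ψ : PropForm} (hψ : ψ.atomsSub {p | 1 ≤ p})
    (β : {α : ℕ → Bool // s α}) :
    Sat (AModel s) (some β) ψ.toDForm ↔ ψ.eval β.1 = true := by
  induction ψ with
  | atom p =>
      have hp : 1 ≤ p := hψ
      show (AModel s).val (some β) p ↔ _
      show (p ≠ 0 ∧ β.1 p = true) ↔ _
      simp only [PropForm.eval]
      exact ⟨fun h => h.2, fun h => ⟨by omega, h⟩⟩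
  | neg φ ih =>
      show ¬ Sat (AModel s) (some β) φ.toDForm ↔ _
      rw [ih hψ]
      simp [PropForm.eval]
  | and φ χ ih1 ih2 =>
      show (Sat _ _ φ.toDForm ∧ Sat _ _ χ.toDForm) ↔ _
      rw [ih1 hψ.1, ih2 hψ.2]
      simp [PropForm.eval]

lemma postEval_nil (p : ℕ) : postEval [] p = none := rfl

lemma postEval_single (i : ℕ) (b : Bool) (p : ℕ) :
    postEval [(i, b)] p = if p = i then some b else none := by
  by_cases h : i = p
  · subst h; simp [postEval, List.find?]
  · have : (i == p) = false := by simp [h]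
    simp [postEval, List.find?, this, Ne.symm h]

lemma sat_pre0 {M : EpiModel Unit} {s Z} (hsim : FullSim M (AModel s) Z) {w : M.World}
    (hw : Z w none) : Sat M w (.atom 0) :=
  (hsim.val_iff w none hw 0).mpr rfl

end Statement4Aux
section Statement4Steps

def Ext2 (s : (ℕ → Bool) → Prop) (i : ℕ) : (ℕ → Bool) → Prop :=
  fun α' => ∃ α, s α ∧ (α' = Function.update α i true ∨ α' = α)

def Kcond (ψ : PropForm) (s : (ℕ → Bool) → Prop) (i : ℕ) : Prop :=
  ∃ α, s α ∧ α i = true ∧ ψ.eval α = true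

def ExtK (ψ : PropForm) (s : (ℕ → Bool) → Prop) (i : ℕ) : (ℕ → Bool) → Prop :=
  fun α' => ∃ α, s α ∧ ((Kcond ψ s i ∧ α' = Function.update α i true) ∨
    (¬ Kcond ψ s i ∧ α' = Function.update α i false))

lemma updVal_none {M : EpiModel Unit} {E : EvtModel Unit} (u : (M.update E).World)
    (h : E.post u.1.2 = []) (p : ℕ) : (M.update E).val u p ↔ M.val u.1.1 p := by
  show (match postEval (E.post u.1.2) p with | some b => b = true | none => M.val u.1.1 p) ↔ _
  rw [h, postEval_nil]

lemma updVal_single {M : EpiModel Unit} {E : EvtModel Unit} (u : (M.update E).World)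
    {i : ℕ} {b : Bool} (h : E.post u.1.2 = [(i, b)]) (p : ℕ) :
    (M.update E).val u p ↔ (if p = i then b = true else M.val u.1.1 p) := by
  show (match postEval (E.post u.1.2) p with | some c => c = true | none => M.val u.1.1 p) ↔ _
  rw [h, postEval_single]
  by_cases hp : p = i <;> simp [hp]

lemma Kcond_iff {M : EpiModel Unit} {s : (ℕ → Bool) → Prop} {Z}
    (hsim : FullSim M (AModel s) Z) {ψ : PropForm}
    (hψ : ψ.atomsSub {p | 1 ≤ p}) {i : ℕ} (hi : 1 ≤ i) {u v} (hZ : Z u v) :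
    Sat M u (khat () (.and (.atom i) ψ.toDForm)) ↔ Kcond ψ s i := by
  have hnu : (khat () (DForm.and (.atom i) ψ.toDForm)).noUpd := ⟨trivial, toDForm_noUpd ψ⟩
  rw [sat_transfer hsim _ hnu u v hZ, sat_khat (fun _ _ _ => trivial)]
  constructor
  · rintro ⟨v', hv'⟩
    cases v' with
    | none =>
        exfalso
        have h0 : (i : ℕ) = 0 := hv'.1
        omega
    | some β => exact ⟨β.1, β.2, hv'.1.2, (sat_toDForm hψ β).mp hv'.2⟩
  · rintro ⟨α, hα, hαi, hev⟩
    exact ⟨some ⟨α, hα⟩, ⟨⟨by omega, hαi⟩, (sat_toDForm hψ ⟨α, hα⟩).mpr hev⟩⟩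

lemma step1 {M : EpiModel Unit} {s : (ℕ → Bool) → Prop} {Z}
    (hsim : FullSim M (AModel s) Z) (i : ℕ) (hi : 1 ≤ i) :
    ∃ Z', FullSim (M.update (deltaE i)) (AModel (Ext2 s i)) Z' ∧
      ∀ (u : (M.update (deltaE i)).World), u.1.2 = 0 → Z u.1.1 none → Z' u none := by
  classical
  refine ⟨fun u v =>
    (u.1.2 = 0 ∧ Z u.1.1 none ∧ v = none) ∨
    (∃ (α : ℕ → Bool) (hα : s α) (β : {γ : ℕ → Bool // Ext2 s i γ}),
      Z u.1.1 (some ⟨α, hα⟩) ∧ v = some β ∧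
      ((u.1.2 = 1 ∧ β.1 = Function.update α i true) ∨ (u.1.2 = 2 ∧ β.1 = α))), ?_,
    fun u h0 hZ => Or.inl ⟨h0, hZ, rfl⟩⟩
  constructor
  · intro a u v; exact ⟨hsim.fullM a u.1.1 v.1.1, rfl⟩
  · intro a u v; trivial
  · rintro u v (⟨he, hZ, rfl⟩ | ⟨α, hα, β, hZ, rfl, (⟨he, hβ⟩ | ⟨he, hβ⟩)⟩) p
    · have hp : (deltaE i).post u.1.2 = [] := by rw [he]; rfl
      rw [updVal_none u hp p]
      exact hsim.val_iff u.1.1 none hZ p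
    · have hp : (deltaE i).post u.1.2 = [(i, true)] := by rw [he]; rfl
      rw [updVal_single u hp p]
      by_cases hpi : p = i
      · rw [if_pos hpi]
        show _ ↔ (p ≠ 0 ∧ β.1 p = true)
        rw [hβ, hpi, Function.update_self]
        simp only [eq_self_iff_true, true_iff, iff_true, and_true, true_and]
        omega
      · rw [if_neg hpi]
        show _ ↔ (p ≠ 0 ∧ β.1 p = true)
        rw [hβ, Function.update_of_ne hpi]
        exact hsim.val_iff u.1.1 (some ⟨α, hα⟩) hZ p
    · have hp : (deltaE i).post u.1.2 = [] := by rw [he]; rfl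
      rw [updVal_none u hp p]
      show _ ↔ (p ≠ 0 ∧ β.1 p = true)
      rw [hβ]
      exact hsim.val_iff u.1.1 (some ⟨α, hα⟩) hZ p
  · intro u
    obtain ⟨⟨w₀, e⟩, hdom⟩ := u
    fin_cases e
    · obtain ⟨v, hv⟩ := hsim.total w₀
      cases v with
      | none => exact ⟨none, Or.inl ⟨rfl, hv, rfl⟩⟩
      | some β =>
          exfalso
          have h1 : Sat M w₀ (.atom 0) := hdom
          exact ((hsim.val_iff w₀ (some β) hv 0).mp h1).1 rfl
    · obtain ⟨v, hv⟩ := hsim.total w₀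
      have h1 : ¬ Sat M w₀ (.atom 0) := hdom
      cases v with
      | none => exact absurd ((hsim.val_iff w₀ none hv 0).mpr rfl) h1
      | some β =>
          obtain ⟨α, hα⟩ := β
          exact ⟨some ⟨Function.update α i true, ⟨α, hα, Or.inl rfl⟩⟩,
            Or.inr ⟨α, hα, _, hv, rfl, Or.inl ⟨rfl, rfl⟩⟩⟩
    · obtain ⟨v, hv⟩ := hsim.total w₀
      have h1 : ¬ Sat M w₀ (.atom 0) := hdom
      cases v with
      | none => exact absurd ((hsim.val_iff w₀ none hv 0).mpr rfl) h1
      | some β =>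
          obtain ⟨α, hα⟩ := β
          exact ⟨some ⟨α, ⟨α, hα, Or.inr rfl⟩⟩,
            Or.inr ⟨α, hα, _, hv, rfl, Or.inr ⟨rfl, rfl⟩⟩⟩
  · intro v
    cases v with
    | none =>
        obtain ⟨u₀, hu₀⟩ := hsim.surj none
        exact ⟨⟨(u₀, 0), sat_pre0 hsim hu₀⟩, Or.inl ⟨rfl, hu₀, rfl⟩⟩
    | some β =>
        obtain ⟨α, hα, hc⟩ := β.2
        obtain ⟨u₀, hu₀⟩ := hsim.surj (some ⟨α, hα⟩)
        have hneg : ¬ Sat M u₀ (.atom 0) := fun h =>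
          ((hsim.val_iff u₀ (some ⟨α, hα⟩) hu₀ 0).mp h).1 rfl
        cases hc with
        | inl h =>
            exact ⟨⟨(u₀, 1), hneg⟩, Or.inr ⟨α, hα, β, hu₀, rfl, Or.inl ⟨rfl, h⟩⟩⟩
        | inr h =>
            exact ⟨⟨(u₀, 2), hneg⟩, Or.inr ⟨α, hα, β, hu₀, rfl, Or.inr ⟨rfl, h⟩⟩⟩

lemma step2 {M : EpiModel Unit} {s : (ℕ → Bool) → Prop} {Z}
    (hsim : FullSim M (AModel s) Z) {ψ : PropForm} (hψ : ψ.atomsSub {p | 1 ≤ p})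
    (i : ℕ) (hi : 1 ≤ i) :
    ∃ Z', FullSim (M.update (deltaE' i ψ)) (AModel (ExtK ψ s i)) Z' ∧
      ∀ (u : (M.update (deltaE' i ψ)).World), u.1.2 = 0 → Z u.1.1 none → Z' u none := by
  classical
  refine ⟨fun u v =>
    (u.1.2 = 0 ∧ Z u.1.1 none ∧ v = none) ∨
    (∃ (α : ℕ → Bool) (hα : s α) (β : {γ : ℕ → Bool // ExtK ψ s i γ}),
      Z u.1.1 (some ⟨α, hα⟩) ∧ v = some β ∧
      ((u.1.2 = 1 ∧ Kcond ψ s i ∧ β.1 = Function.update α i true) ∨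
       (u.1.2 = 2 ∧ ¬ Kcond ψ s i ∧ β.1 = Function.update α i false))), ?_,
    fun u h0 hZ => Or.inl ⟨h0, hZ, rfl⟩⟩
  constructor
  · intro a u v; exact ⟨hsim.fullM a u.1.1 v.1.1, rfl⟩
  · intro a u v; trivial
  · rintro u v (⟨he, hZ, rfl⟩ | ⟨α, hα, β, hZ, rfl, (⟨he, hK, hβ⟩ | ⟨he, hK, hβ⟩)⟩) p
    · have hp : (deltaE' i ψ).post u.1.2 = [] := by rw [he]; rfl
      rw [updVal_none u hp p]
      exact hsim.val_iff u.1.1 none hZ p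
    · have hp : (deltaE' i ψ).post u.1.2 = [(i, true)] := by rw [he]; rfl
      rw [updVal_single u hp p]
      by_cases hpi : p = i
      · rw [if_pos hpi]
        show _ ↔ (p ≠ 0 ∧ β.1 p = true)
        rw [hβ, hpi, Function.update_self]
        simp only [eq_self_iff_true, true_iff, iff_true, and_true, true_and]
        omega
      · rw [if_neg hpi]
        show _ ↔ (p ≠ 0 ∧ β.1 p = true)
        rw [hβ, Function.update_of_ne hpi]
        exact hsim.val_iff u.1.1 (some ⟨α, hα⟩) hZ p
    · have hp : (deltaE' i ψ).post u.1.2 = [(i, false)] := by rw [he]; rfl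
      rw [updVal_single u hp p]
      by_cases hpi : p = i
      · rw [if_pos hpi]
        show _ ↔ (p ≠ 0 ∧ β.1 p = true)
        rw [hβ, hpi, Function.update_self]
        simp
      · rw [if_neg hpi]
        show _ ↔ (p ≠ 0 ∧ β.1 p = true)
        rw [hβ, Function.update_of_ne hpi]
        exact hsim.val_iff u.1.1 (some ⟨α, hα⟩) hZ p
  · intro u
    obtain ⟨⟨w₀, e⟩, hdom⟩ := u
    fin_cases e
    · obtain ⟨v, hv⟩ := hsim.total w₀
      cases v with
      | none => exact ⟨none, Or.inl ⟨rfl, hv, rfl⟩⟩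
      | some β =>
          exfalso
          have h1 : Sat M w₀ (.atom 0) := hdom
          exact ((hsim.val_iff w₀ (some β) hv 0).mp h1).1 rfl
    · have hdom' : Sat M w₀ (.and (.neg (.atom 0)) (khat () (.and (.atom i) ψ.toDForm))) := hdom
      obtain ⟨v, hv⟩ := hsim.total w₀
      cases v with
      | none => exact absurd ((hsim.val_iff w₀ none hv 0).mpr rfl) hdom'.1
      | some β =>
          obtain ⟨α, hα⟩ := β
          have hK : Kcond ψ s i := (Kcond_iff hsim hψ hi hv).mp hdom'.2
          exact ⟨some ⟨Function.update α i true, ⟨α, hα, Or.inl ⟨hK, rfl⟩⟩⟩,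
            Or.inr ⟨α, hα, _, hv, rfl, Or.inl ⟨rfl, hK, rfl⟩⟩⟩
    · have hdom' : Sat M w₀
        (.and (.neg (.atom 0)) (.neg (khat () (.and (.atom i) ψ.toDForm)))) := hdom
      obtain ⟨v, hv⟩ := hsim.total w₀
      cases v with
      | none => exact absurd ((hsim.val_iff w₀ none hv 0).mpr rfl) hdom'.1
      | some β =>
          obtain ⟨α, hα⟩ := β
          have hK : ¬ Kcond ψ s i := fun k => hdom'.2 ((Kcond_iff hsim hψ hi hv).mpr k)
          exact ⟨some ⟨Function.update α i false, ⟨α, hα, Or.inr ⟨hK, rfl⟩⟩⟩,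
            Or.inr ⟨α, hα, _, hv, rfl, Or.inr ⟨rfl, hK, rfl⟩⟩⟩
  · intro v
    cases v with
    | none =>
        obtain ⟨u₀, hu₀⟩ := hsim.surj none
        exact ⟨⟨(u₀, 0), sat_pre0 hsim hu₀⟩, Or.inl ⟨rfl, hu₀, rfl⟩⟩
    | some β =>
        obtain ⟨α, hα, hc⟩ := β.2
        obtain ⟨u₀, hu₀⟩ := hsim.surj (some ⟨α, hα⟩)
        have hneg : ¬ Sat M u₀ (.atom 0) := fun h =>
          ((hsim.val_iff u₀ (some ⟨α, hα⟩) hu₀ 0).mp h).1 rfl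
        cases hc with
        | inl h =>
            have hpre : Sat M u₀ ((deltaE' i ψ).pre 1) :=
              ⟨hneg, (Kcond_iff hsim hψ hi hu₀).mpr h.1⟩
            exact ⟨⟨(u₀, 1), hpre⟩, Or.inr ⟨α, hα, β, hu₀, rfl, Or.inl ⟨rfl, h.1, h.2⟩⟩⟩
        | inr h =>
            have hpre : Sat M u₀ ((deltaE' i ψ).pre 2) :=
              ⟨hneg, fun hk => h.1 ((Kcond_iff hsim hψ hi hu₀).mp hk)⟩
            exact ⟨⟨(u₀, 2), hpre⟩, Or.inr ⟨α, hα, β, hu₀, rfl, Or.inr ⟨rfl, h.1, h.2⟩⟩⟩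

end Statement4Steps
section Statement4Chain

lemma chain1 (P : ((ℕ → Bool) → Prop) → Prop) (inner : DForm Unit)
    (hinner : ∀ (M : EpiModel Unit) (w : M.World) (s : (ℕ → Bool) → Prop) Z,
      FullSim M (AModel s) Z → Z w none → (Sat M w inner ↔ P s)) :
    ∀ (l : List ℕ), (∀ i ∈ l, 1 ≤ i) →
      ∀ (M : EpiModel Unit) (w : M.World) (s : (ℕ → Bool) → Prop) Z,
        FullSim M (AModel s) Z → Z w none →
        (Sat M w ((l.map deltaE).foldr (fun E acc => updSingle E 0 acc) inner) ↔
          P (l.foldl Ext2 s)) := by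
  intro l
  induction l with
  | nil => intro _ M w s Z hsim hw; exact hinner M w s Z hsim hw
  | cons i l ih =>
      intro hl M w s Z hsim hw
      simp only [List.map_cons, List.foldr_cons, List.foldl_cons]
      have hi : 1 ≤ i := hl i (by simp)
      have hpre : Sat M w ((deltaE i).pre 0) := sat_pre0 hsim hw
      obtain ⟨Z', hsim', hdes⟩ := step1 hsim i hi
      have key := ih (fun j hj => hl j (by simp [hj])) (M.update (deltaE i))
        ⟨(w, 0), hpre⟩ (Ext2 s i) Z' hsim' (hdes ⟨(w, 0), hpre⟩ rfl hw)
      rw [sat_updSingle]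
      constructor
      · intro h; exact key.mp (h hpre)
      · intro h h'; exact key.mpr h
  
lemma chain2 (P : ((ℕ → Bool) → Prop) → Prop) (inner : DForm Unit) {ψ : PropForm}
    (hψ : ψ.atomsSub {p | 1 ≤ p})
    (hinner : ∀ (M : EpiModel Unit) (w : M.World) (s : (ℕ → Bool) → Prop) Z,
      FullSim M (AModel s) Z → Z w none → (Sat M w inner ↔ P s)) :
    ∀ (l : List ℕ), (∀ i ∈ l, 1 ≤ i) →
      ∀ (M : EpiModel Unit) (w : M.World) (s : (ℕ → Bool) → Prop) Z,
        FullSim M (AModel s) Z → Z w none →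
        (Sat M w ((l.map (fun j => deltaE' j ψ)).foldr (fun E acc => updSingle E 0 acc) inner) ↔
          P (l.foldl (ExtK ψ) s)) := by
  intro l
  induction l with
  | nil => intro _ M w s Z hsim hw; exact hinner M w s Z hsim hw
  | cons i l ih =>
      intro hl M w s Z hsim hw
      simp only [List.map_cons, List.foldr_cons, List.foldl_cons]
      have hi : 1 ≤ i := hl i (by simp)
      have hpre : Sat M w ((deltaE' i ψ).pre 0) := sat_pre0 hsim hw
      obtain ⟨Z', hsim', hdes⟩ := step2 hsim hψ i hi
      have key := ih (fun j hj => hl j (by simp [hj])) (M.update (deltaE' i ψ))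
        ⟨(w, 0), hpre⟩ (ExtK ψ s i) Z' hsim' (hdes ⟨(w, 0), hpre⟩ rfl hw)
      rw [sat_updSingle]
      constructor
      · intro h; exact key.mp (h hpre)
      · intro h h'; exact key.mpr h

abbrev S0 : (ℕ → Bool) → Prop := fun α => α = fun _ => false

abbrev Z0 : Fin 2 → (AModel S0).World → Prop := fun w v =>
  (w = 0 ∧ v = none) ∨ (w = 1 ∧ ∃ β, v = some β)

lemma initSim : FullSim deltaM (AModel S0) Z0 := by
  constructor
  · intro a u v; trivial
  · intro a u v; trivial
  · rintro u v (⟨rfl, rfl⟩ | ⟨rfl, β, rfl⟩) p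
    · show ((0 : Fin 2) = 0 ∧ p = 0) ↔ p = 0
      simp
    · show ((1 : Fin 2) = 0 ∧ p = 0) ↔ (p ≠ 0 ∧ β.1 p = true)
      have hβ : β.1 = fun _ => false := β.2
      rw [hβ]
      simp
  · intro u
    obtain ⟨uv, hlt⟩ := u
    interval_cases uv
    · exact ⟨none, Or.inl ⟨rfl, rfl⟩⟩
    · exact ⟨some ⟨fun _ => false, rfl⟩, Or.inr ⟨rfl, _, rfl⟩⟩
  · intro v
    cases v with
    | none => exact ⟨(0 : Fin 2), Or.inl ⟨rfl, rfl⟩⟩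
    | some β => exact ⟨(1 : Fin 2), Or.inr ⟨rfl, β, rfl⟩⟩

lemma inner_char (n : ℕ) (hn : 1 ≤ n) :
    ∀ (M : EpiModel Unit) (w : M.World) (s : (ℕ → Bool) → Prop) Z,
      FullSim M (AModel s) Z → Z w none →
      (Sat M w (khat () (.atom n)) ↔ ∃ α, s α ∧ α n = true) := by
  intro M w s Z hsim hw
  rw [sat_khat hsim.fullM]
  constructor
  · rintro ⟨v, hv⟩
    obtain ⟨v', hv'⟩ := hsim.total v
    have := (hsim.val_iff v v' hv' n).mp hv
    cases v' with
    | none => exact absurd this (by intro h; have : (n : ℕ) = 0 := h; omega)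
    | some β => exact ⟨β.1, β.2, this.2⟩
  · rintro ⟨α, hα, hαn⟩
    obtain ⟨u, hu⟩ := hsim.surj (some ⟨α, hα⟩)
    exact ⟨u, (hsim.val_iff u (some ⟨α, hα⟩) hu n).mpr ⟨by omega, hαn⟩⟩

lemma deltaChi_char (n : ℕ) (hn : 1 ≤ n) (ψ : PropForm) (hψ : ψ.atomsSub {p | 1 ≤ p}) :
    Sat deltaM deltaW0 (deltaChi n ψ) ↔
      ∃ α, ((List.range' 1 n).foldl (ExtK ψ) ((List.range' 1 n).foldl Ext2 S0)) α ∧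
        α n = true := by
  have hmem : ∀ i ∈ List.range' 1 n, 1 ≤ i := fun i hi => (List.mem_range'_1.mp hi).1
  have hmap1 : (List.range n).map (fun j => deltaE (j+1)) = (List.range' 1 n).map deltaE := by
    rw [List.range'_eq_map_range, List.map_map]
    apply List.map_congr_left
    intro j _
    simp [Nat.add_comm]
  have hmap2 : (List.range n).map (fun j => deltaE' (j+1) ψ) =
      (List.range' 1 n).map (fun j => deltaE' j ψ) := by
    rw [List.range'_eq_map_range, List.map_map]
    apply List.map_congr_left
    intro j _
    simp [Nat.add_comm]
  have h2 := chain2 (fun s => ∃ α, s α ∧ α n = true) (khat () (.atom n)) hψ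
    (inner_char n hn) (List.range' 1 n) hmem
  have h1 := chain1 (fun s => ∃ α, ((List.range' 1 n).foldl (ExtK ψ) s) α ∧ α n = true)
    (((List.range' 1 n).map (fun j => deltaE' j ψ)).foldr (fun E acc => updSingle E 0 acc)
      (khat () (.atom n)))
    (fun M w s Z hsim hw => h2 M w s Z hsim hw) (List.range' 1 n) hmem
    deltaM deltaW0 S0 Z0 initSim (Or.inl ⟨rfl, rfl⟩)
  have goal_eq : deltaChi n ψ = ((List.range' 1 n).map deltaE).foldr
      (fun E acc => updSingle E 0 acc)
      (((List.range' 1 n).map (fun j => deltaE' j ψ)).foldr (fun E acc => updSingle E 0 acc)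
        (khat () (.atom n))) := by
    unfold deltaChi
    rw [hmap1, hmap2]
  rw [goal_eq]
  exact h1

end Statement4Chain
section Statement4Sets

def Tset (n : ℕ) : (ℕ → Bool) → Prop := fun α => ∀ j, (j = 0 ∨ n < j) → α j = false

lemma ext1_char : ∀ i : ℕ, (List.range' 1 i).foldl Ext2 S0 = Tset i := by
  intro i
  induction i with
  | zero =>
      funext α
      apply propext
      constructor
      · rintro rfl j _; rfl
      · intro h; funext j; exact h j (by omega)
  | succ i ih =>
      have hr : List.range' 1 (i+1) = List.range' 1 i ++ [i+1] := by
        rw [List.range'_concat]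
        simp [Nat.add_comm]
      rw [hr, List.foldl_append, ih]
      simp only [List.foldl_cons, List.foldl_nil]
      funext α'
      apply propext
      constructor
      · rintro ⟨α, hα, (rfl | rfl)⟩ j hj
        · rw [Function.update_of_ne (by omega : j ≠ i+1)]
          exact hα j (by omega)
        · exact hα j (by omega)
      · intro h
        by_cases hb : α' (i+1) = true
        · refine ⟨Function.update α' (i+1) false, ?_, Or.inl ?_⟩
          · intro j hj
            by_cases hji : j = i+1
            · subst hji; rw [Function.update_self]
            · rw [Function.update_of_ne hji]; exact h j (by omega)
          · funext j
            by_cases hji : j = i+1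
            · subst hji; rw [Function.update_self, hb]
            · rw [Function.update_of_ne hji, Function.update_of_ne hji]
        · refine ⟨α', fun j hj => ?_, Or.inr rfl⟩
          by_cases hji : j = i+1
          · subst hji; exact Bool.eq_false_iff.mpr hb
          · exact h j (by omega)

def gSet (ψ : PropForm) (n : ℕ) : ℕ → ((ℕ → Bool) → Prop)
  | 0 => Tset n
  | i+1 => ExtK ψ (gSet ψ n i) (i+1)

lemma ext2_char (ψ : PropForm) (n : ℕ) :
    ∀ i : ℕ, (List.range' 1 i).foldl (ExtK ψ) (Tset n) = gSet ψ n i := by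
  intro i
  induction i with
  | zero => rfl
  | succ i ih =>
      have hr : List.range' 1 (i+1) = List.range' 1 i ++ [i+1] := by
        rw [List.range'_concat]
        simp [Nat.add_comm]
      rw [hr, List.foldl_append, ih]
      simp only [List.foldl_cons, List.foldl_nil]
      rfl

def cProp (ψ : PropForm) (n j : ℕ) : Prop := Kcond ψ (gSet ψ n (j-1)) j

lemma g_char (ψ : PropForm) (n : ℕ) :
    ∀ i : ℕ, i ≤ n → ∀ α, gSet ψ n i α ↔
      (Tset n α ∧ ∀ j, 1 ≤ j → j ≤ i → (α j = true ↔ cProp ψ n j)) := by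
  intro i
  induction i with
  | zero =>
      intro _ α
      constructor
      · intro h; exact ⟨h, fun j h1 h2 => by omega⟩
      · intro h; exact h.1
  | succ i ih =>
      intro hin α'
      have hci : cProp ψ n (i+1) = Kcond ψ (gSet ψ n i) (i+1) := rfl
      constructor
      · rintro ⟨α, hα, (⟨hK, rfl⟩ | ⟨hK, rfl⟩)⟩
        · obtain ⟨hT, hjs⟩ := (ih (by omega) α).mp hα
          refine ⟨?_, ?_⟩
          · intro j hj
            rw [Function.update_of_ne (by omega : j ≠ i+1)]
            exact hT j hj
          · intro j h1 h2
            by_cases hji : j = i+1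
            · subst hji
              rw [Function.update_self, hci]
              exact iff_of_true rfl hK
            · rw [Function.update_of_ne hji]
              exact hjs j h1 (by omega)
        · obtain ⟨hT, hjs⟩ := (ih (by omega) α).mp hα
          refine ⟨?_, ?_⟩
          · intro j hj
            rw [Function.update_of_ne (by omega : j ≠ i+1)]
            exact hT j hj
          · intro j h1 h2
            by_cases hji : j = i+1
            · subst hji
              rw [Function.update_self, hci]
              exact iff_of_false (by simp) hK
            · rw [Function.update_of_ne hji]
              exact hjs j h1 (by omega)
      · rintro ⟨hT, hjs⟩
        by_cases hK : Kcond ψ (gSet ψ n i) (i+1)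
        · refine ⟨Function.update α' (i+1) false, (ih (by omega) _).mpr ⟨?_, ?_⟩,
            Or.inl ⟨hK, ?_⟩⟩
          · intro j hj
            by_cases hji : j = i+1
            · subst hji; rw [Function.update_self]
            · rw [Function.update_of_ne hji]; exact hT j hj
          · intro j h1 h2
            rw [Function.update_of_ne (by omega : j ≠ i+1)]
            exact hjs j h1 (by omega)
          · funext j
            by_cases hji : j = i+1
            · subst hji
              rw [Function.update_self]
              exact (hjs (i+1) (by omega) le_rfl).mpr (by rw [hci]; exact hK)
            · rw [Function.update_of_ne hji, Function.update_of_ne hji]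
        · refine ⟨Function.update α' (i+1) true, (ih (by omega) _).mpr ⟨?_, ?_⟩,
            Or.inr ⟨hK, ?_⟩⟩
          · intro j hj
            by_cases hji : j = i+1
            · omega
            · rw [Function.update_of_ne hji]; exact hT j hj
          · intro j h1 h2
            rw [Function.update_of_ne (by omega : j ≠ i+1)]
            exact hjs j h1 (by omega)
          · funext j
            by_cases hji : j = i+1
            · subst hji
              rw [Function.update_self]
              refine Bool.eq_false_iff.mpr (fun hb => hK ?_)
              rw [← hci]
              exact (hjs (i+1) (by omega) le_rfl).mp hb
            · rw [Function.update_of_ne hji, Function.update_of_ne hji]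

lemma g_sat (ψ : PropForm) (n : ℕ) (hvars : ψ.atomsSub (Set.Icc 1 n))
    (hsat : ∃ α, ψ.eval α = true) :
    ∀ i : ℕ, i ≤ n → ∃ α, gSet ψ n i α ∧ ψ.eval α = true := by
  intro i
  induction i with
  | zero =>
      intro _
      obtain ⟨β, hβ⟩ := hsat
      refine ⟨fun j => if 1 ≤ j ∧ j ≤ n then β j else false, ?_, ?_⟩
      · intro j hj
        show (if 1 ≤ j ∧ j ≤ n then β j else false) = false
        rw [if_neg (by omega)]
      · rw [eval_congr hvars (fun p hp => ?_)]
        · exact hβ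
        · have hp' := Set.mem_Icc.mp hp
          show (if 1 ≤ p ∧ p ≤ n then β p else false) = β p
          rw [if_pos hp']
  | succ i ih =>
      intro hin
      obtain ⟨α, hα, hev⟩ := ih (by omega)
      by_cases hK : Kcond ψ (gSet ψ n i) (i+1)
      · obtain ⟨α₀, hα₀, h0i, h0ev⟩ := hK
        refine ⟨α₀, ⟨α₀, hα₀, Or.inl ⟨⟨α₀, hα₀, h0i, h0ev⟩, ?_⟩⟩, h0ev⟩
        funext j
        by_cases hji : j = i+1
        · subst hji; rw [Function.update_self, h0i]
        · rw [Function.update_of_ne hji]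
      · have hαi : α (i+1) = false := by
          cases hb : α (i+1) with
          | false => rfl
          | true => exact absurd ⟨α, hα, hb, hev⟩ hK
        refine ⟨α, ⟨α, hα, Or.inr ⟨hK, ?_⟩⟩, hev⟩
        funext j
        by_cases hji : j = i+1
        · subst hji; rw [Function.update_self, hαi]
        · rw [Function.update_of_ne hji]

end Statement4Sets

/-- In the Δ₂ᵖ-hardness construction, for every satisfiable
propositional formula `ψ` over `x_1, …, x_n`: `M, w0 ⊨ χ` if and only if the
lexicographically maximal assignment satisfying `ψ` sets `x_n` to true. -/
theorem statement4 (n : ℕ) (hn : 1 ≤ n) (ψ : PropForm)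
    (hvars : ψ.atomsSub (Set.Icc 1 n)) (hsat : ∃ α, ψ.eval α = true) :
    Sat deltaM deltaW0 (deltaChi n ψ) ↔ ∀ α, IsLexMaxSat n ψ α → α n = true := by
  have hψ1 : ψ.atomsSub {p | 1 ≤ p} :=
    propAtomsSub_mono (fun p hp => (Set.mem_Icc.mp hp).1) ψ hvars
  rw [deltaChi_char n hn ψ hψ1, ext1_char n, ext2_char ψ n n]
  obtain ⟨γ, hγg, hγev⟩ := g_sat ψ n hvars hsat n le_rfl
  obtain ⟨hγT, hγc⟩ := (g_char ψ n n le_rfl γ).mp hγg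
  have hγmax : IsLexMaxSat n ψ γ := by
    refine ⟨hγev, ?_⟩
    rintro β hβ ⟨i, h1i, hin, hβi, hγi, hagree⟩
    have hci : ¬ cProp ψ n i := by
      intro hc
      have := (hγc i h1i hin).mpr hc
      rw [hγi] at this
      exact Bool.false_ne_true this
    have hβ'ev : ψ.eval (fun j => if 1 ≤ j ∧ j ≤ n then β j else false) = true := by
      rw [eval_congr hvars (fun p hp => ?_)]
      · exact hβ
      · have hp' := Set.mem_Icc.mp hp
        show (if 1 ≤ p ∧ p ≤ n then β p else false) = β p
        rw [if_pos hp']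
    have hβ'mem : gSet ψ n (i-1) (fun j => if 1 ≤ j ∧ j ≤ n then β j else false) := by
      apply (g_char ψ n (i-1) (by omega) _).mpr
      refine ⟨?_, ?_⟩
      · intro j hj
        show (if 1 ≤ j ∧ j ≤ n then β j else false) = false
        rw [if_neg (by omega)]
      · intro j h1 h2
        show (if 1 ≤ j ∧ j ≤ n then β j else false) = true ↔ _
        rw [if_pos ⟨h1, by omega⟩, hagree j h1 (by omega)]
        exact hγc j h1 (by omega)
    refine hci ⟨fun j => if 1 ≤ j ∧ j ≤ n then β j else false, hβ'mem, ?_, hβ'ev⟩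
    show (if 1 ≤ i ∧ i ≤ n then β i else false) = true
    rw [if_pos ⟨h1i, hin⟩]
    exact hβi
  have agree : ∀ α, IsLexMaxSat n ψ α → ∀ j, 1 ≤ j → j ≤ n → α j = γ j := by
    intro α hα j
    induction j using Nat.strong_induction_on with
    | _ j ih =>
      intro h1 h2
      by_contra hne
      cases hb : α j with
      | true =>
          have hγj : γ j = false := by
            cases hg : γ j with
            | false => rfl
            | true => exact absurd (hb.trans hg.symm) hne
          exact hγmax.2 α hα.1
            ⟨j, h1, h2, hb, hγj, fun j' h1' h2' => ih j' h2' h1' (by omega)⟩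
      | false =>
          have hγj : γ j = true := by
            cases hg : γ j with
            | true => rfl
            | false => exact absurd (hb.trans hg.symm) hne
          exact hα.2 γ hγev
            ⟨j, h1, h2, hγj, hb, fun j' h1' h2' => (ih j' h2' h1' (by omega)).symm⟩
  constructor
  · rintro ⟨α, hαg, hαn⟩ α' hα'
    obtain ⟨hT', hc'⟩ := (g_char ψ n n le_rfl α).mp hαg
    have hγn : γ n = true := (hγc n hn le_rfl).mpr ((hc' n hn le_rfl).mp hαn)
    rw [agree α' hα' n hn le_rfl]
    exact hγn
  · intro h
    exact ⟨γ, hγg, h γ hγmax⟩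

end DELMC
end

section
/- In the Δ^p_2-hardness construction, the model (M',w') = (M,w0) ⊗ (E_1,e_1) ⊗ … ⊗ (E_n,e_n) consists of the designated world w' (which makes z true and all of x_1,…,x_n false) and, for each truth assignment α to x_1,…,x_n, exactly one world that makes z false and whose valuation on x_1,…,x_n agrees with α; moreover all worlds of M' are mutually a-related. -/
namespace DELMC

/-! ### Auxiliary material for Statement 5 -/

def Inv5 (M : EpiModel Unit) (n : ℕ) : Prop :=
  (∀ u v : M.World, M.rel () u v) ∧
  (∃! w : M.World, M.val w 0) ∧
  (∀ w : M.World, M.val w 0 → ∀ p, M.val w p ↔ p = 0) ∧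
  (∀ v : M.World, ¬ M.val v 0 → ∀ p, p = 0 ∨ n < p → ¬ M.val v p) ∧
  (∀ α : ℕ → Bool, ∃! v : M.World,
    ¬ M.val v 0 ∧ ∀ i, 1 ≤ i → i ≤ n → (M.val v i ↔ α i = true))

lemma inv5_base : Inv5 deltaM 0 := by
  refine ⟨fun u v => trivial, ⟨(⟨0, by omega⟩ : Fin 2), ⟨rfl, rfl⟩, ?_⟩, ?_, ?_, ?_⟩
  · intro w hw; exact hw.1
  · rintro w ⟨rfl, -⟩ p
    constructor
    · rintro ⟨-, hp⟩; exact hp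
    · rintro rfl; exact ⟨rfl, rfl⟩
  · rintro v hv p hp ⟨rfl, rfl⟩; exact hv ⟨rfl, rfl⟩
  · intro α
    refine ⟨(⟨1, by omega⟩ : Fin 2), ⟨?_, fun i h1 h0 => by omega⟩, ?_⟩
    · rintro ⟨h, -⟩; exact absurd h (by decide)
    · rintro v ⟨hv, -⟩
      have hne : v ≠ ⟨0, by omega⟩ := fun h => hv ⟨h, rfl⟩
      have h2 : v.val < 2 := v.isLt
      have hv0 : v.val ≠ 0 := fun h => hne (Fin.ext h)
      exact Fin.ext (show v.val = 1 by omega)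

lemma upd5_val (M : EpiModel Unit) (n : ℕ)
    (u : (M.update (deltaE (n+1))).World) (p : ℕ) :
    (M.update (deltaE (n+1))).val u p ↔ (u.1.2 = 1 ∧ p = n+1) ∨ M.val u.1.1 p := by
  show (match postEval ((deltaE (n+1)).post u.1.2) p with
        | some b => b = true
        | none => M.val u.1.1 p) ↔ _
  by_cases h1 : u.1.2 = 1
  · rw [show (deltaE (n+1)).post u.1.2 = [(n+1, true)] by simp [deltaE, h1]; rfl]
    by_cases hp : p = n+1
    · subst hp
      simp [postEval, List.find?, h1]
    · have hb : (n+1 == p) = false := by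
        simp only [beq_eq_false_iff_ne, ne_eq]
        exact Ne.symm hp
      have hnone : postEval [(n+1, true)] p = none := by
        simp only [postEval, List.find?]
        rw [hb]
        rfl
      rw [hnone]
      simp [hp]
  · rw [show (deltaE (n+1)).post u.1.2 = [] by simp [deltaE, h1]; exact h1]
    show M.val u.1.1 p ↔ _
    simp [h1]

lemma inv5_step (M : EpiModel Unit) (n : ℕ) (h : Inv5 M n) :
    Inv5 (M.update (deltaE (n+1))) (n+1) := by
  obtain ⟨hrel, ⟨w0, hw0, hw0u⟩, hz, hnz, hα⟩ := h
  have hdom0 : ∀ u : (M.update (deltaE (n+1))).World,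
      u.1.2 = 0 → M.val u.1.1 0 := by
    intro u h0
    have hh : Sat M u.1.1 ((deltaE (n+1)).pre u.1.2) := u.2
    rw [show (deltaE (n+1)).pre u.1.2 = .atom 0 by simp [deltaE, h0]; rfl] at hh
    exact hh
  have hdom1 : ∀ u : (M.update (deltaE (n+1))).World,
      u.1.2 ≠ 0 → ¬ M.val u.1.1 0 := by
    intro u h0
    have hh : Sat M u.1.1 ((deltaE (n+1)).pre u.1.2) := u.2
    rw [show (deltaE (n+1)).pre u.1.2 = .neg (.atom 0) by simp [deltaE, h0]; exact h0] at hh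
    exact hh
  refine ⟨fun u v => ⟨hrel _ _, rfl⟩, ?_, ?_, ?_, ?_⟩
  · -- unique z world
    refine ⟨⟨(w0, (0 : Fin 3)),
        show Sat M w0 ((deltaE (n+1)).pre 0) by
          rw [show (deltaE (n+1)).pre 0 = .atom 0 by simp [deltaE]; rfl]
          exact hw0⟩, ?_, ?_⟩
    · exact (upd5_val M n _ 0).mpr (Or.inr hw0)
    · intro u hu
      rw [upd5_val] at hu
      have hm : M.val u.1.1 0 := by
        rcases hu with ⟨-, hh⟩ | hh
        · exact absurd hh (by omega)
        · exact hh
      have h0 : u.1.2 = 0 := by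
        by_contra h0
        exact hdom1 u h0 hm
      exact Subtype.ext (Prod.ext (hw0u _ hm) h0)
  · -- z world values
    intro u hu p
    rw [upd5_val] at hu ⊢
    have hm : M.val u.1.1 0 := by
      rcases hu with ⟨-, hh⟩ | hh
      · exact absurd hh (by omega)
      · exact hh
    have h0 : u.1.2 = 0 := by
      by_contra h0
      exact hdom1 u h0 hm
    rw [hz _ hm]
    have hne1 : u.1.2 ≠ 1 := by
      intro hh
      rw [h0] at hh
      exact absurd (show (0 : ℕ) = 1 from congrArg Fin.val hh) (by omega)
    simp [hne1]
  · -- non-z world values outside range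
    intro u hu p hp
    rw [upd5_val] at hu ⊢
    have hm : ¬ M.val u.1.1 0 := fun hh => hu (Or.inr hh)
    rintro (⟨-, h1⟩ | hh)
    · omega
    · exact hnz _ hm p (by omega) hh
  · -- one world per assignment
    intro α
    obtain ⟨v, ⟨hv0, hvi⟩, hvu⟩ := hα α
    set e : Fin 3 := if α (n+1) = true then 1 else 2 with he
    have hne : e ≠ 0 := by rw [he]; split <;> decide
    have he1 : e = 1 ↔ α (n+1) = true := by
      cases hb : α (n+1) <;> simp [he, hb]
    have hepre : Sat M v ((deltaE (n+1)).pre e) := by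
      rw [show (deltaE (n+1)).pre e = .neg (.atom 0) by simp [deltaE, hne]]
      exact hv0
    refine ⟨⟨(v, e), hepre⟩, ⟨?_, ?_⟩, ?_⟩
    · erw [upd5_val]
      rintro (⟨-, hh⟩ | hh)
      · exact absurd hh (by omega)
      · exact hv0 hh
    · intro i h1 hi
      erw [upd5_val]
      rcases Nat.lt_or_ge i (n+1) with hlt | hge
      · have hne' : i ≠ n+1 := by omega
        rw [hvi i h1 (by omega)]
        simp [hne']
      · have hi' : i = n+1 := by omega
        subst hi'
        have hmv : ¬ M.val v (n+1) := hnz _ hv0 _ (Or.inr (by omega))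
        constructor
        · rintro (⟨h1', -⟩ | hh)
          · exact he1.mp h1'
          · exact absurd hh hmv
        · intro hb
          exact Or.inl ⟨he1.mpr hb, rfl⟩
    · rintro u ⟨hu0, hui⟩
      rw [upd5_val] at hu0
      have hm0 : ¬ M.val u.1.1 0 := fun hh => hu0 (Or.inr hh)
      have hne0 : u.1.2 ≠ 0 := fun h0 => hm0 (hdom0 u h0)
      have h11 : u.1.1 = v := by
        apply hvu
        refine ⟨hm0, ?_⟩
        intro i h1 hi
        have hvi' := hui i h1 (by omega)
        rw [upd5_val] at hvi'
        rw [← hvi']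
        have hne' : i ≠ n+1 := by omega
        simp [hne']
      have h2 : u.1.2 = e := by
        have hn1 := hui (n+1) (by omega) (le_refl _)
        rw [upd5_val] at hn1
        have hmv : ¬ M.val u.1.1 (n+1) := by
          rw [h11]; exact hnz _ hv0 _ (Or.inr (by omega))
        cases hb : α (n+1) with
        | true =>
          have h1 : u.1.2 = 1 := by
            rcases hn1.mpr hb with ⟨hh, -⟩ | hh
            · exact hh
            · exact absurd hh hmv
          rw [h1]
          exact (he1.mpr hb).symm
        | false =>
          have h1 : u.1.2 ≠ 1 := by
            intro h1
            have := hn1.mp (Or.inl ⟨h1, rfl⟩)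
            rw [hb] at this
            exact Bool.noConfusion this
          have hlt : u.1.2.val < 3 := u.1.2.isLt
          have e0 : u.1.2.val ≠ 0 := fun hh => hne0 (Fin.ext hh)
          have e1 : u.1.2.val ≠ 1 := fun hh => h1 (Fin.ext hh)
          have hv2 : u.1.2 = 2 := Fin.ext (show u.1.2.val = 2 by omega)
          have he2 : e = 2 := by rw [he, if_neg (by simp [hb])]
          rw [hv2, he2]
          rfl
      exact Subtype.ext (Prod.ext h11 h2)

lemma deltaM'_succ (n : ℕ) :
    deltaM' (n+1) = (deltaM' n).update (deltaE (n+1)) := by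
  simp [deltaM', List.range_succ]

lemma inv5_deltaM' (n : ℕ) : Inv5 (deltaM' n) n := by
  induction n with
  | zero =>
    have h0 : deltaM' 0 = deltaM := by simp [deltaM']
    rw [h0]
    exact inv5_base
  | succ n ih =>
    rw [deltaM'_succ]
    exact inv5_step _ _ ih

/-- In the Δ₂ᵖ-hardness construction, the model
`M' = M ⊗ E_1 ⊗ … ⊗ E_n` consists of the designated world (the unique world making `z`
true, which makes all of `x_1, …, x_n` false) and, for each truth assignment `α` to
`x_1, …, x_n`, exactly one world making `z` false and agreeing with `α` on
`x_1, …, x_n`; moreover all worlds are mutually `a`-related. -/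
theorem statement5 (n : ℕ) (hn : 1 ≤ n) :
    (∃! w : (deltaM' n).World, (deltaM' n).val w 0) ∧
    (∀ w : (deltaM' n).World, (deltaM' n).val w 0 →
      ∀ i, 1 ≤ i → i ≤ n → ¬ (deltaM' n).val w i) ∧
    (∀ α : ℕ → Bool, ∃! v : (deltaM' n).World,
      ¬ (deltaM' n).val v 0 ∧ ∀ i, 1 ≤ i → i ≤ n → ((deltaM' n).val v i ↔ α i = true)) ∧
    (∀ u v : (deltaM' n).World, (deltaM' n).rel () u v) := by
  obtain ⟨hrel, hz, hzval, hnzval, hα⟩ := inv5_deltaM' n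
  refine ⟨hz, ?_, hα, hrel⟩
  intro w hw i h1 hi
  rw [hzval w hw i]
  omega

end DELMC
end
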